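/- For positive definite Hermitian matrices A and B, the matrix U := B^{-1/2} A^{-1/2} (A^{1/2} B A^{1/2})^{1/2} is unitary, i.e. U U* = I. -/

import Mathlib

open Matrix
open scoped ComplexOrder

/-- The positive semidefinite square root, as `Matrix.PosSemidef.sqrt` was defined in
Mathlib (December 2024); it has since been removed from Mathlib. -/
noncomputable def Matrix.PosSemidef.sqrt {n : Type*} [Fintype n] [DecidableEq n] {𝕜 : Type*}
    [RCLike 𝕜] {A : Matrix n n 𝕜} (hA : A.PosSemidef) : Matrix n n 𝕜 :=
  hA.1.eigenvectorUnitary.1 * diagonal ((↑) ∘ (Real.sqrt ·) ∘ hA.1.eigenvalues) *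
    (star hA.1.eigenvectorUnitary : Matrix n n 𝕜)

theorem Matrix.PosSemidef.sqrt_herm_port {n : Type*} [Fintype n] [DecidableEq n] {𝕜 : Type*}
    [RCLike 𝕜] {A : Matrix n n 𝕜} (hA : A.PosSemidef) : hA.sqrtᴴ = hA.sqrt := by
  unfold Matrix.PosSemidef.sqrt
  rw [conjTranspose_mul, conjTranspose_mul, diagonal_conjTranspose]
  have : star ((RCLike.ofReal : ℝ → 𝕜) ∘ (Real.sqrt ·) ∘ hA.1.eigenvalues) =
      (RCLike.ofReal : ℝ → 𝕜) ∘ (Real.sqrt ·) ∘ hA.1.eigenvalues := by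
    funext i; simp
  rw [this, mul_assoc]
  simp [Matrix.star_eq_conjTranspose, mul_assoc]

theorem Matrix.PosSemidef.sqrt_mul_self_port {n : Type*} [Fintype n] [DecidableEq n] {𝕜 : Type*}
    [RCLike 𝕜] {A : Matrix n n 𝕜} (hA : A.PosSemidef) : hA.sqrt * hA.sqrt = A := by
  unfold Matrix.PosSemidef.sqrt
  have hU : (star hA.1.eigenvectorUnitary : Matrix n n 𝕜) * hA.1.eigenvectorUnitary.1 = 1 :=
    Unitary.coe_star_mul_self _
  have hD : diagonal ((RCLike.ofReal : ℝ → 𝕜) ∘ (Real.sqrt ·) ∘ hA.1.eigenvalues) *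
      diagonal ((RCLike.ofReal : ℝ → 𝕜) ∘ (Real.sqrt ·) ∘ hA.1.eigenvalues) =
      diagonal ((RCLike.ofReal : ℝ → 𝕜) ∘ hA.1.eigenvalues) := by
    rw [diagonal_mul_diagonal]
    congr 1; funext i
    simp only [Function.comp_apply]
    rw [← RCLike.ofReal_mul, Real.mul_self_sqrt (hA.eigenvalues_nonneg i)]
  conv_rhs => rw [hA.1.spectral_theorem, Unitary.conjStarAlgAut_apply]
  calc _ = hA.1.eigenvectorUnitary.1 * diagonal ((RCLike.ofReal : ℝ → 𝕜) ∘ (Real.sqrt ·) ∘ hA.1.eigenvalues) *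
      ((star hA.1.eigenvectorUnitary : Matrix n n 𝕜) * hA.1.eigenvectorUnitary.1) *
      diagonal ((RCLike.ofReal : ℝ → 𝕜) ∘ (Real.sqrt ·) ∘ hA.1.eigenvalues) *
      (star hA.1.eigenvectorUnitary : Matrix n n 𝕜) := by simp only [mul_assoc]
    _ = _ := by rw [hU, mul_one, mul_assoc _ (diagonal _) (diagonal _), hD]

theorem allpass_unitary (n : ℕ)
    (A B : Matrix (Fin n) (Fin n) ℂ) (hA : A.PosDef) (hB : B.PosDef)
    (hS : (hA.posSemidef.sqrt * B * hA.posSemidef.sqrt).PosSemidef) :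
    (hB.posSemidef.sqrt⁻¹ * hA.posSemidef.sqrt⁻¹ * hS.sqrt) *
      (hB.posSemidef.sqrt⁻¹ * hA.posSemidef.sqrt⁻¹ * hS.sqrt)ᴴ = 1 := by
  set a := hA.posSemidef.sqrt with ha_def
  set b := hB.posSemidef.sqrt with hb_def
  set s := hS.sqrt with hs_def
  have haH : aᴴ = a := hA.posSemidef.sqrt_herm_port
  have hbH : bᴴ = b := hB.posSemidef.sqrt_herm_port
  have hsH : sᴴ = s := hS.sqrt_herm_port
  have haa : a * a = A := hA.posSemidef.sqrt_mul_self_port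
  have hbb : b * b = B := hB.posSemidef.sqrt_mul_self_port
  have hss : s * s = a * B * a := hS.sqrt_mul_self_port
  have haU : IsUnit a.det := by
    have : IsUnit (a.det * a.det) := by
      rw [← det_mul, haa]; exact hA.det_pos.ne'.isUnit
    exact isUnit_of_mul_isUnit_left this
  have hbU : IsUnit b.det := by
    have : IsUnit (b.det * b.det) := by
      rw [← det_mul, hbb]; exact hB.det_pos.ne'.isUnit
    exact isUnit_of_mul_isUnit_left this
  have haiH : a⁻¹ᴴ = a⁻¹ := by rw [conjTranspose_nonsing_inv, haH]
  have hbiH : b⁻¹ᴴ = b⁻¹ := by rw [conjTranspose_nonsing_inv, hbH]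
  calc b⁻¹ * a⁻¹ * s * (b⁻¹ * a⁻¹ * s)ᴴ
      = b⁻¹ * (a⁻¹ * ((s * s) * (a⁻¹ * b⁻¹))) := by
        simp only [conjTranspose_mul, haiH, hbiH, hsH]
        noncomm_ring
    _ = b⁻¹ * ((a⁻¹ * a) * B * (a * a⁻¹) * b⁻¹) := by
        rw [hss]; noncomm_ring
    _ = b⁻¹ * (B * b⁻¹) := by
        rw [nonsing_inv_mul a haU, mul_nonsing_inv a haU, one_mul, mul_one]
    _ = (b⁻¹ * b) * (b * b⁻¹) := by rw [← hbb]; noncomm_ring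
    _ = 1 := by rw [nonsing_inv_mul b hbU, mul_nonsing_inv b hbU, one_mul]
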